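/- arXiv:2108.03709 — 6 statements merged into one kernel-verified Lean document; each statement's English description precedes it below -/
import Mathlib

section
/- Fix n ≥ 2, x_i ∈ [0,1), Δ > 0 with x_i + Δ ≤ 1, and the class mean x̄ of the full effort profile. Then the grade ratio m ↦ (x_i + Δ + max(m - x̄ - Δ/n, 0)) / (x_i + max(m - x̄, 0)) is nonincreasing in m on (0,1), provided x_i > 0. -/
theorem stmt_3 (n : ℕ) (hn : 2 ≤ n) (xi Δ xbar : ℝ)
    (hxi : xi ∈ Set.Ico (0:ℝ) 1) (hxipos : 0 < xi) (hΔ : 0 < Δ)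
    (hsum : xi + Δ ≤ 1) (hxbar : xbar ∈ Set.Icc (0:ℝ) 1) :
    AntitoneOn (fun m : ℝ =>
      (xi + Δ + max (m - xbar - Δ / n) 0) / (xi + max (m - xbar) 0))
      (Set.Ioo (0:ℝ) 1) := by
  intro m1 _ m2 _ h12
  have hn' : (2:ℝ) ≤ n := by exact_mod_cast hn
  have hnpos : (0:ℝ) < n := by linarith
  have hd0 : 0 < Δ / n := div_pos hΔ hnpos
  have hd : Δ / n ≤ Δ := by
    rw [div_le_iff₀ hnpos]; nlinarith
  set A := max (m1 - xbar) 0 with hA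
  set B := max (m2 - xbar) 0 with hB
  set A' := max (m1 - xbar - Δ / n) 0 with hA'
  set B' := max (m2 - xbar - Δ / n) 0 with hB'
  have hA0 : 0 ≤ A := le_max_right _ _
  have hA'0 : 0 ≤ A' := le_max_right _ _
  have hAB : A ≤ B := max_le_max (by linarith) le_rfl
  have hA'A : A' ≤ A := max_le_max (by linarith) le_rfl
  have hLip : B' - A' ≤ B - A := by
    rcases max_cases (m1 - xbar) 0 with ⟨e1, f1⟩ | ⟨e1, f1⟩ <;>
    rcases max_cases (m2 - xbar) 0 with ⟨e2, f2⟩ | ⟨e2, f2⟩ <;>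
    rcases max_cases (m1 - xbar - Δ / n) 0 with ⟨g1, k1⟩ | ⟨g1, k1⟩ <;>
    rcases max_cases (m2 - xbar - Δ / n) 0 with ⟨g2, k2⟩ | ⟨g2, k2⟩ <;>
    rw [hA, hB, hA', hB', e1, e2, g1, g2] <;> linarith
  have hcap : A - A' ≤ Δ / n := by
    rcases max_cases (m1 - xbar) 0 with ⟨e1, f1⟩ | ⟨e1, f1⟩ <;>
    rcases max_cases (m1 - xbar - Δ / n) 0 with ⟨g1, k1⟩ | ⟨g1, k1⟩ <;>
    rw [hA, hA', e1, g1] <;> linarith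
  have hpos1 : 0 < xi + A := by positivity
  have hpos2 : 0 < xi + B := by positivity
  simp only
  rw [div_le_div_iff₀ hpos2 hpos1]
  nlinarith [mul_le_mul_of_nonneg_left hLip hA0,
    mul_le_mul_of_nonneg_right (show A - A' ≤ Δ by linarith) (sub_nonneg.mpr hAB),
    mul_le_mul_of_nonneg_left (sub_nonneg.mpr hAB) hA'0,
    mul_le_mul_of_nonneg_right hLip hxi.1]
end

section
/- Let n ≥ 2, m ∈ (0,1), α_i ∈ (0,1), and let G(x, s) = max(m + ((n-1)/n)(x - s), x) for x ∈ [0,1] and opponents' mean s ∈ [0,1]. Then for every x_i ∈ (α_i, 1] and every s ∈ [0,1], we have G(x_i,s)^(α_i) (1-x_i)^(1-α_i) < G(α_i,s)^(α_i) (1-α_i)^(1-α_i). -/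
lemma gm_lt {u v a : ℝ} (hu : 0 < u) (hv : 0 < v) (huv : u ≠ v) (ha : 0 < a)
    (ha1 : a < 1) : u ^ a * v ^ (1 - a) < a * u + (1 - a) * v := by
  have ha' : (0:ℝ) < 1 - a := by linarith
  have h := strictConcaveOn_log_Ioi.2 (Set.mem_Ioi.mpr hu) (Set.mem_Ioi.mpr hv) huv ha ha'
    (show a + (1 - a) = 1 by ring)
  have hpos : 0 < a * u + (1 - a) * v := by positivity
  calc u ^ a * v ^ (1 - a)
      = Real.exp (Real.log u * a + Real.log v * (1 - a)) := by
        rw [Real.rpow_def_of_pos hu, Real.rpow_def_of_pos hv, ← Real.exp_add]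
    _ < Real.exp (Real.log (a * u + (1 - a) * v)) := by
        apply Real.exp_lt_exp.mpr
        simpa [smul_eq_mul, mul_comm] using h
    _ = a * u + (1 - a) * v := Real.exp_log hpos

lemma key_lt {A t a : ℝ} (hαA : a ≤ A) (ht : 0 < t) (htB : t < 1 - a)
    (ha : 0 < a) (ha1 : a < 1) :
    (A + t) ^ a * (1 - a - t) ^ (1 - a) < A ^ a * (1 - a) ^ (1 - a) := by
  set B : ℝ := 1 - a with hB
  have hA : 0 < A := lt_of_lt_of_le ha hαA
  have hBpos : 0 < B := by simp [hB]; linarith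
  set u : ℝ := (A + t) / A with hu
  set v : ℝ := (B - t) / B with hv
  have hupos : 0 < u := by positivity
  have hvpos : 0 < v := div_pos (by linarith) hBpos
  have hu1 : 1 < u := by rw [hu, lt_div_iff₀ hA]; linarith
  have hv1 : v < 1 := by rw [hv, div_lt_one hBpos]; linarith
  have huv : u ≠ v := by intro h; rw [h] at hu1; linarith
  have hgm := gm_lt hupos hvpos huv ha ha1
  have hsum : a * u + (1 - a) * v ≤ 1 := by
    rw [hu, hv]
    have h1 : (1 - a) * ((B - t) / B) = B - t := by
      field_simp [hB]
      rw [hB]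
    rw [h1]
    have h2 : a * ((A + t) / A) = a + a * t / A := by field_simp
    rw [h2]
    have : a * t / A ≤ t := by
      rw [div_le_iff₀ hA]
      nlinarith
    simp [hB]; linarith
  have e1 : A + t = A * u := by rw [hu]; field_simp
  have e2 : B - t = B * v := by rw [hv]; field_simp
  calc (A + t) ^ a * (B - t) ^ (1 - a)
      = (A ^ a * B ^ (1 - a)) * (u ^ a * v ^ (1 - a)) := by
        rw [e1, e2, Real.mul_rpow hA.le hupos.le, Real.mul_rpow hBpos.le hvpos.le]; ring
    _ < (A ^ a * B ^ (1 - a)) * (a * u + (1 - a) * v) := by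
        apply mul_lt_mul_of_pos_left hgm
        positivity
    _ ≤ A ^ a * B ^ (1 - a) := by
        nlinarith [Real.rpow_pos_of_pos hA a, Real.rpow_pos_of_pos hBpos (1 - a),
          mul_pos (Real.rpow_pos_of_pos hA a) (Real.rpow_pos_of_pos hBpos (1 - a))]

theorem stmt_4 (n : ℕ) (hn : 2 ≤ n) (m αi : ℝ)
    (hm : m ∈ Set.Ioo (0:ℝ) 1) (hα : αi ∈ Set.Ioo (0:ℝ) 1)
    (G : ℝ → ℝ → ℝ)
    (hG : ∀ x s, G x s = max (m + ((n : ℝ) - 1) / n * (x - s)) x) :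
    ∀ xi ∈ Set.Ioc αi 1, ∀ s ∈ Set.Icc (0:ℝ) 1,
      (G xi s) ^ αi * (1 - xi) ^ (1 - αi) <
      (G αi s) ^ αi * (1 - αi) ^ (1 - αi) := by
  obtain ⟨hm0, hm1⟩ := hm
  obtain ⟨ha0, ha1⟩ := hα
  rintro xi ⟨hx1, hx2⟩ s ⟨hs0, hs1⟩
  have hn2 : (2:ℝ) ≤ (n:ℝ) := by exact_mod_cast hn
  set c : ℝ := ((n:ℝ) - 1) / n with hc
  have hc0 : 0 ≤ c := by rw [hc]; apply div_nonneg <;> linarith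
  have hc1 : c < 1 := by
    rw [hc, div_lt_one (by linarith)]; linarith
  have hGα : G αi s = max (m + c * (αi - s)) αi := hG αi s
  have hA0 : 0 < G αi s := by rw [hGα]; exact lt_max_of_lt_right ha0
  have hAα : αi ≤ G αi s := by rw [hGα]; exact le_max_right _ _
  have hRpos : 0 < (G αi s) ^ αi * (1 - αi) ^ (1 - αi) := by
    have := Real.rpow_pos_of_pos hA0 αi
    have h2 : (0:ℝ) < (1 - αi) ^ (1 - αi) := Real.rpow_pos_of_pos (by linarith) (1 - αi)
    positivity
  rcases eq_or_lt_of_le hx2 with h1 | h1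
  · -- xi = 1
    rw [h1]
    have : (1 - (1:ℝ)) ^ (1 - αi) = 0 := by
      rw [sub_self, Real.zero_rpow (by linarith)]
    rw [this, mul_zero]
    exact hRpos
  · -- xi < 1
    set t : ℝ := xi - αi with htdef
    have ht : 0 < t := by simp [htdef]; linarith
    have htB : t < 1 - αi := by simp [htdef]; linarith
    have hGle : G xi s ≤ G αi s + t := by
      rw [hG xi s]
      apply max_le
      · have : m + c * (xi - s) = (m + c * (αi - s)) + c * t := by
          rw [htdef]; ring
        rw [this]
        have h3 : m + c * (αi - s) ≤ G αi s := by rw [hGα]; exact le_max_left _ _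
        nlinarith
      · have : xi = αi + t := by rw [htdef]; ring
        linarith
    have hGxpos : 0 < G xi s := by
      rw [hG xi s]; exact lt_max_of_lt_right (by linarith)
    have step1 : (G xi s) ^ αi * (1 - xi) ^ (1 - αi) ≤
        (G αi s + t) ^ αi * (1 - αi - t) ^ (1 - αi) := by
      have hx1eq : 1 - xi = 1 - αi - t := by rw [htdef]; ring
      rw [hx1eq]
      apply mul_le_mul_of_nonneg_right
      · exact Real.rpow_le_rpow hGxpos.le hGle ha0.le
      · exact (Real.rpow_pos_of_pos (by linarith) _).le
    calc (G xi s) ^ αi * (1 - xi) ^ (1 - αi)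
        ≤ (G αi s + t) ^ αi * (1 - αi - t) ^ (1 - αi) := step1
      _ < (G αi s) ^ αi * (1 - αi) ^ (1 - αi) := key_lt hAα ht htB ha0 ha1
end

section
/- For every integer n ≥ 2 and every z ∈ (0,1), (n - z)·(1-z)^((1-z)/z) > (n-1)/n. -/
theorem stmt_7 (n : ℕ) (hn : 2 ≤ n) (z : ℝ) (hz : z ∈ Set.Ioo (0:ℝ) 1) :
    ((n : ℝ) - z) * (1 - z) ^ ((1 - z) / z) > ((n : ℝ) - 1) / n := by
  obtain ⟨hz0, hz1⟩ := hz
  set t : ℝ := 1 - z with ht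
  have ht0 : 0 < t := by simp only [ht]; linarith
  have ht1 : t < 1 := by simp only [ht]; linarith
  set s : ℝ := Real.sqrt t with hs
  have hs0 : 0 < s := Real.sqrt_pos.mpr ht0
  have hst : s ^ 2 = t := Real.sq_sqrt ht0.le
  have hs1 : s < 1 := by nlinarith
  -- rewrite rpow as exp
  have hrpow : (1 - z) ^ ((1 - z) / z) = Real.exp (Real.log t * (t / z)) := by
    rw [Real.rpow_def_of_pos (show (0:ℝ) < 1 - z by linarith)]
  -- log bound : log t = 2 log s ≥ 2 (1 - 1/s)
  have hlogs : 1 - 1/s ≤ Real.log s := by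
    have h := Real.log_le_sub_one_of_pos (show (0:ℝ) < 1/s by positivity)
    rw [Real.log_div one_ne_zero hs0.ne', Real.log_one] at h
    linarith
  have hlogt : 2 * (1 - 1/s) ≤ Real.log t := by
    rw [← hst, Real.log_pow]
    push_cast
    linarith
  -- exponent bound
  have hz0' : 0 < z := hz0
  have hexp : -(2*s/(1+s)) ≤ Real.log t * (t / z) := by
    have htz : 0 < t / z := by positivity
    have h1 : 2 * (1 - 1/s) * (t / z) ≤ Real.log t * (t / z) :=
      mul_le_mul_of_nonneg_right hlogt htz.le
    have heq : 2 * (1 - 1/s) * (t / z) = -(2*s/(1+s)) := by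
      have hzt : z = (1 - s) * (1 + s) := by rw [show (1-s)*(1+s) = 1 - s^2 by ring, hst]; simp [ht]
      have h1s : (1:ℝ) + s ≠ 0 := by positivity
      have h2s : (1:ℝ) - s ≠ 0 := by intro h; nlinarith
      rw [hzt, ← hst]
      field_simp
      ring
    linarith [heq ▸ h1]
  have hE : 2 / ((1+s) * Real.exp 1) ≤ Real.exp (Real.log t * (t / z)) := by
    have h2 : Real.exp (-(2*s/(1+s))) ≤ Real.exp (Real.log t * (t / z)) :=
      Real.exp_le_exp.mpr hexp
    have h3 : 2 / (1+s) ≤ Real.exp ((1-s)/(1+s)) := by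
      have := Real.add_one_le_exp ((1-s)/(1+s))
      have heq : (1-s)/(1+s) + 1 = 2/(1+s) := by field_simp; ring
      linarith
    have h4 : Real.exp (-(2*s/(1+s))) = Real.exp ((1-s)/(1+s)) / Real.exp 1 := by
      rw [← Real.exp_sub]
      congr 1
      field_simp
      ring
    have hepos : 0 < Real.exp 1 := Real.exp_pos 1
    have h5 : 2 / ((1+s) * Real.exp 1) ≤ Real.exp ((1-s)/(1+s)) / Real.exp 1 := by
      rw [div_le_div_iff₀ (by positivity) hepos]
      calc 2 * Real.exp 1 = (2/(1+s)) * ((1+s) * Real.exp 1) := by field_simp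
        _ ≤ Real.exp ((1-s)/(1+s)) * ((1+s) * Real.exp 1) := by
            exact mul_le_mul_of_nonneg_right h3 (by positivity)
    linarith
  -- final numeric inequality
  have hn2 : (2:ℝ) ≤ (n:ℝ) := by exact_mod_cast hn
  have he : Real.exp 1 < 2.7182818286 := Real.exp_one_lt_d9
  have hepos : 0 < Real.exp 1 := Real.exp_pos 1
  have hnz : ((n:ℝ) - z) = (n:ℝ) - 1 + s^2 := by rw [hst]; simp [ht]
  have he2 : Real.exp 1 ^ 2 < 2.7182818286 ^ 2 := by nlinarith
  have hkey : ((n:ℝ) - 1)/n < ((n:ℝ) - 1 + s^2) * (2 / ((1+s) * Real.exp 1)) := by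
    have hrw : ((n:ℝ) - 1 + s^2) * (2 / ((1+s) * Real.exp 1))
        = (2 * ((n:ℝ) - 1 + s^2)) / ((1+s) * Real.exp 1) := by ring
    rw [hrw, div_lt_div_iff₀ (by positivity) (by positivity)]
    nlinarith [sq_nonneg (4*(n:ℝ)*s - ((n:ℝ)-1)*Real.exp 1), sq_nonneg ((n:ℝ) - 2),
      mul_pos hs0 hepos, hn2, hs1, he, he2, hepos.le]
  calc ((n:ℝ) - 1)/n < ((n:ℝ) - 1 + s^2) * (2 / ((1+s) * Real.exp 1)) := hkey
    _ ≤ ((n:ℝ) - z) * (1 - z) ^ ((1 - z) / z) := by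
        rw [hnz, hrpow]
        apply mul_le_mul_of_nonneg_left hE (by nlinarith)
end

section
/- The function g_n(z) := n z + (n - z) log(1 - z) satisfies g_n(z) ≤ 0 for all z ∈ [0,1) and all integers n ≥ 2. -/
/-- Padé-type bound: `log (1 - z) ≤ 2z/(z-2)` for `z ∈ [0,1)`. -/
lemma key_log_bound (z : ℝ) (h0 : 0 ≤ z) (h1 : z < 1) :
    Real.log (1 - z) ≤ 2 * z / (z - 2) := by
  set F : ℝ → ℝ := fun x => 2 * x / (x - 2) - Real.log (1 - x) with hF
  have hderiv : ∀ x ∈ Set.Ioo (0:ℝ) 1,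
      HasDerivAt F ((2 * (x - 2) - 2 * x * 1) / (x - 2) ^ 2 - (1 - x)⁻¹ * (-1)) x := by
    intro x hx
    have hx2 : x - 2 ≠ 0 := by nlinarith [hx.2]
    have hx1 : (1 : ℝ) - x ≠ 0 := by nlinarith [hx.2]
    have hd1 : HasDerivAt (fun x : ℝ => 2 * x / (x - 2))
        ((2 * (x - 2) - 2 * x * 1) / (x - 2) ^ 2) x := by
      simpa [Pi.div_def] using ((hasDerivAt_id x).const_mul 2).div ((hasDerivAt_id x).sub_const 2) hx2
    have hd2 : HasDerivAt (fun x : ℝ => Real.log (1 - x)) ((1 - x)⁻¹ * (-1)) x := by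
      have hinner : HasDerivAt (fun x : ℝ => 1 - x) (-1) x := by
        simpa using (hasDerivAt_id x).const_sub 1
      exact (Real.hasDerivAt_log hx1).comp x hinner
    exact hd1.sub hd2
  have hmono : MonotoneOn F (Set.Ico (0:ℝ) 1) := by
    have hint : interior (Set.Ico (0:ℝ) 1) = Set.Ioo 0 1 := interior_Ico
    apply monotoneOn_of_deriv_nonneg (convex_Ico 0 1)
    · apply ContinuousOn.sub
      · apply ContinuousOn.div (by fun_prop) (by fun_prop)
        intro x hx
        have := hx.2
        intro h; nlinarith
      · apply ContinuousOn.log (by fun_prop)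
        intro x hx
        have := hx.2
        intro h; nlinarith
    · rw [hint]
      intro x hx
      exact ((hderiv x hx).differentiableAt).differentiableWithinAt
    · rw [hint]
      intro x hx
      rw [(hderiv x hx).deriv]
      have hx2 : (0:ℝ) < (x - 2) ^ 2 := by nlinarith [hx.2]
      have hx1 : (0:ℝ) < 1 - x := by linarith [hx.2]
      have h4 : 4 / (x - 2) ^ 2 ≤ 1 / (1 - x) := by
        rw [div_le_div_iff₀ hx2 hx1]
        nlinarith [sq_nonneg x]
      have : (2 * (x - 2) - 2 * x * 1) / (x - 2) ^ 2 = -(4 / (x - 2) ^ 2) := by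
        ring_nf
      rw [this]
      have : (1 - x)⁻¹ * (-1) = -(1 / (1 - x)) := by ring
      rw [this]
      linarith
  have h0mem : (0:ℝ) ∈ Set.Ico (0:ℝ) 1 := by constructor <;> norm_num
  have hzmem : z ∈ Set.Ico (0:ℝ) 1 := ⟨h0, h1⟩
  have := hmono h0mem hzmem h0
  simp only [hF] at this
  norm_num at this
  linarith

theorem stmt_8 (n : ℕ) (hn : 2 ≤ n) (z : ℝ) (hz : z ∈ Set.Ico (0:ℝ) 1) :
    (n : ℝ) * z + ((n : ℝ) - z) * Real.log (1 - z) ≤ 0 := by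
  obtain ⟨h0, h1⟩ := hz
  have hn2 : (2:ℝ) ≤ (n:ℝ) := by exact_mod_cast hn
  have hL := key_log_bound z h0 h1
  have hnz : (0:ℝ) ≤ (n:ℝ) - z := by linarith
  have hmul : ((n:ℝ) - z) * Real.log (1 - z) ≤ ((n:ℝ) - z) * (2 * z / (z - 2)) :=
    mul_le_mul_of_nonneg_left hL hnz
  have hz2 : z - 2 < 0 := by linarith
  have hz2' : z - 2 ≠ 0 := ne_of_lt hz2
  have hcancel : 2 * z / (z - 2) * (z - 2) = 2 * z := div_mul_cancel₀ _ hz2'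
  have hq : (n:ℝ) * z + ((n:ℝ) - z) * (2 * z / (z - 2)) ≤ 0 := by
    rw [← sub_nonneg]
    have h2z : (2:ℝ) - z ≠ 0 := by linarith
    have : -((n:ℝ) * z + ((n:ℝ) - z) * (2 * z / (z - 2))) =
        (((n:ℝ) - 2) * z ^ 2) / (2 - z) := by
      field_simp
      ring
    rw [zero_sub, this]
    apply div_nonneg (by nlinarith [sq_nonneg z]) (by linarith)
  linarith
end

section
/- Fix n ≥ 2, m ∈ (0,1), α ∈ (0,1), and define φ(z) = (m + ((n-1)/n)(1 - z))^α (1 + n m/(n-1) - z)^(1-α) - 1. Then φ is strictly decreasing on the interval [(n m - α)/(n-1), n m/(n-1) - α/(n-α)] and has exactly one zero there, provided φ is nonnegative at the left endpoint and nonpositive at the right endpoint (which always holds). -/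
theorem stmt_12 (n : ℕ) (hn : 2 ≤ n) (m α : ℝ)
    (hm : m ∈ Set.Ioo (0:ℝ) 1) (hα : α ∈ Set.Ioo (0:ℝ) 1)
    (φ : ℝ → ℝ)
    (hφ : ∀ z, φ z = (m + ((n : ℝ) - 1) / n * (1 - z)) ^ α *
      (1 + (n : ℝ) * m / ((n : ℝ) - 1) - z) ^ (1 - α) - 1) :
    StrictAntiOn φ
      (Set.Icc (((n : ℝ) * m - α) / ((n : ℝ) - 1))
        ((n : ℝ) * m / ((n : ℝ) - 1) - α / ((n : ℝ) - α))) ∧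
    0 ≤ φ (((n : ℝ) * m - α) / ((n : ℝ) - 1)) ∧
    φ ((n : ℝ) * m / ((n : ℝ) - 1) - α / ((n : ℝ) - α)) ≤ 0 ∧
    (∃! z, z ∈ Set.Icc (((n : ℝ) * m - α) / ((n : ℝ) - 1))
        ((n : ℝ) * m / ((n : ℝ) - 1) - α / ((n : ℝ) - α)) ∧ φ z = 0) := by
  obtain ⟨hm0, hm1⟩ := hm
  obtain ⟨ha0, ha1⟩ := hα
  have hφf : φ = fun z => (m + ((n : ℝ) - 1) / n * (1 - z)) ^ α *
      (1 + (n : ℝ) * m / ((n : ℝ) - 1) - z) ^ (1 - α) - 1 := funext hφ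
  subst hφf
  have hN2 : (2:ℝ) ≤ (n:ℝ) := by exact_mod_cast hn
  set N := (n:ℝ) with hNdef
  have hN1 : (0:ℝ) < N - 1 := by linarith
  have hN0 : (0:ℝ) < N := by linarith
  have hNa : (0:ℝ) < N - α := by linarith
  set L := (N * m - α) / (N - 1) with hLdef
  set R := N * m / (N - 1) - α / (N - α) with hRdef
  clear_value N L R
  have hA1 : (0:ℝ) < 1 - α := by linarith
  -- affine identities
  have hAeq : ∀ z : ℝ, m + (N - 1) / N * (1 - z)
      = (N - 1) / (N - α) + (N - 1) / N * (R - z) := by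
    intro z; rw [hRdef]; field_simp; ring
  have hBeq : ∀ z : ℝ, 1 + N * m / (N - 1) - z = N / (N - α) + (R - z) := by
    intro z; rw [hRdef]; field_simp; ring
  have hApos : ∀ z ∈ Set.Icc L R, 0 < m + (N - 1) / N * (1 - z) := by
    intro z hz
    obtain ⟨hzL, hzR⟩ := hz
    rw [hAeq]
    have h1 : 0 < (N - 1) / (N - α) := div_pos hN1 hNa
    have h2 : 0 ≤ (N - 1) / N * (R - z) :=
      mul_nonneg (div_nonneg hN1.le hN0.le) (by linarith)
    linarith
  have hBpos : ∀ z ∈ Set.Icc L R, 0 < 1 + N * m / (N - 1) - z := by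
    intro z hz
    obtain ⟨hzL, hzR⟩ := hz
    rw [hBeq]
    have h1 : 0 < N / (N - α) := div_pos hN0 hNa
    linarith
  -- strict antitonicity
  have hanti : StrictAntiOn (fun z => (m + (N - 1) / N * (1 - z)) ^ α *
      (1 + N * m / (N - 1) - z) ^ (1 - α) - 1) (Set.Icc L R) := by
    intro x hx y hy hxy
    simp only
    have hAx := hApos x hx
    have hAy := hApos y hy
    have hBx := hBpos x hx
    have hBy := hBpos y hy
    have hslope : 0 < (N - 1) / N := div_pos hN1 hN0
    have hAlt : m + (N - 1) / N * (1 - y) < m + (N - 1) / N * (1 - x) := by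
      nlinarith
    have hBlt : 1 + N * m / (N - 1) - y < 1 + N * m / (N - 1) - x := by linarith
    have h1 : (m + (N - 1) / N * (1 - y)) ^ α < (m + (N - 1) / N * (1 - x)) ^ α :=
      Real.rpow_lt_rpow hAy.le hAlt ha0
    have h2 : (1 + N * m / (N - 1) - y) ^ (1 - α) < (1 + N * m / (N - 1) - x) ^ (1 - α) :=
      Real.rpow_lt_rpow hBy.le hBlt hA1
    have := mul_lt_mul h1 h2.le (Real.rpow_pos_of_pos hBy _)
      (Real.rpow_nonneg hAx.le _)
    linarith
  -- value at left endpoint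
  have hAL : m + (N - 1) / N * (1 - L) = (N - 1 + α) / N := by
    rw [hLdef]; field_simp; ring
  have hBL : 1 + N * m / (N - 1) - L = (N - 1 + α) / (N - 1) := by
    rw [hLdef]; field_simp; ring
  have hc : (0:ℝ) < N - 1 + α := by linarith
  have hDLpos : (0:ℝ) < N ^ α * (N - 1) ^ (1 - α) :=
    mul_pos (Real.rpow_pos_of_pos hN0 _) (Real.rpow_pos_of_pos hN1 _)
  have keyL : N ^ α * (N - 1) ^ (1 - α) ≤ N - 1 + α := by
    have h := Real.geom_mean_le_arith_mean2_weighted ha0.le hA1.le hN0.le hN1.le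
      (by ring)
    have : α * N + (1 - α) * (N - 1) = N - 1 + α := by ring
    linarith
  have hprodL : ((N - 1 + α) / N) ^ α * ((N - 1 + α) / (N - 1)) ^ (1 - α)
      = (N - 1 + α) / (N ^ α * (N - 1) ^ (1 - α)) := by
    rw [Real.div_rpow hc.le hN0.le, Real.div_rpow hc.le hN1.le,
      div_mul_div_comm, ← Real.rpow_add hc]
    norm_num
  have hL0 : 0 ≤ (m + (N - 1) / N * (1 - L)) ^ α *
      (1 + N * m / (N - 1) - L) ^ (1 - α) - 1 := by
    rw [hAL, hBL, hprodL]
    have : (1:ℝ) ≤ (N - 1 + α) / (N ^ α * (N - 1) ^ (1 - α)) :=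
      (one_le_div hDLpos).mpr keyL
    linarith
  -- value at right endpoint
  have hAR : m + (N - 1) / N * (1 - R) = (N - 1) / (N - α) := by
    rw [hRdef]; field_simp; ring
  have hBR : 1 + N * m / (N - 1) - R = N / (N - α) := by
    rw [hRdef]; field_simp; ring
  have keyR : (N - 1) ^ α * N ^ (1 - α) ≤ N - α := by
    have h := Real.geom_mean_le_arith_mean2_weighted ha0.le hA1.le hN1.le hN0.le
      (by ring)
    have : α * (N - 1) + (1 - α) * N = N - α := by ring
    linarith
  have hprodR : ((N - 1) / (N - α)) ^ α * (N / (N - α)) ^ (1 - α)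
      = ((N - 1) ^ α * N ^ (1 - α)) / (N - α) := by
    rw [Real.div_rpow hN1.le hNa.le, Real.div_rpow hN0.le hNa.le,
      div_mul_div_comm, ← Real.rpow_add hNa]
    norm_num
  have hR0 : (m + (N - 1) / N * (1 - R)) ^ α *
      (1 + N * m / (N - 1) - R) ^ (1 - α) - 1 ≤ 0 := by
    rw [hAR, hBR, hprodR]
    have : ((N - 1) ^ α * N ^ (1 - α)) / (N - α) ≤ 1 :=
      (div_le_one hNa).mpr keyR
    linarith
  -- L ≤ R
  have hLR : L ≤ R := by
    have hdiff : R - L = α * (1 - α) / ((N - 1) * (N - α)) := by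
      rw [hLdef, hRdef]; field_simp; ring
    have : 0 ≤ α * (1 - α) / ((N - 1) * (N - α)) :=
      div_nonneg (mul_nonneg ha0.le hA1.le) (mul_nonneg hN1.le hNa.le)
    linarith
  -- continuity
  have hcont : ContinuousOn (fun z => (m + (N - 1) / N * (1 - z)) ^ α *
      (1 + N * m / (N - 1) - z) ^ (1 - α) - 1) (Set.Icc L R) := by
    intro z hz
    apply ContinuousAt.continuousWithinAt
    have hA := hApos z hz
    have hB := hBpos z hz
    have c1 : ContinuousAt (fun z : ℝ => m + (N - 1) / N * (1 - z)) z := by fun_prop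
    have c2 : ContinuousAt (fun z : ℝ => 1 + N * m / (N - 1) - z) z := by fun_prop
    have r1 : ContinuousAt (fun z : ℝ => (m + (N - 1) / N * (1 - z)) ^ α) z :=
      c1.rpow_const (Or.inl hA.ne')
    have r2 : ContinuousAt (fun z : ℝ => (1 + N * m / (N - 1) - z) ^ (1 - α)) z :=
      c2.rpow_const (Or.inl hB.ne')
    exact (r1.mul r2).sub continuousAt_const
  -- existence of zero by IVT
  have h0mem : (0:ℝ) ∈ Set.Icc
      ((fun z => (m + (N - 1) / N * (1 - z)) ^ α *
        (1 + N * m / (N - 1) - z) ^ (1 - α) - 1) R)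
      ((fun z => (m + (N - 1) / N * (1 - z)) ^ α *
        (1 + N * m / (N - 1) - z) ^ (1 - α) - 1) L) := ⟨hR0, hL0⟩
  obtain ⟨z, hzmem, hz0⟩ := intermediate_value_Icc' hLR hcont h0mem
  refine ⟨hanti, hL0, hR0, z, ⟨hzmem, hz0⟩, ?_⟩
  rintro y ⟨hy, hy0⟩
  exact hanti.injOn hy hzmem (hy0.trans hz0.symm)
end

section
/- Let n ≥ 2, m ∈ (0,1), α_1,...,α_n ∈ (0,1), S := (∑_i ((n-1)α_i - (1-α_i) n m)/(n-α_i)) / (1 - ∑_i (1-α_i)/(n-α_i)), assuming the denominator is nonzero. Then with S_2 := ∑_i 1/(n-α_i) and α̂ := n(1 - 1/S_2), the average x̄ := S/n satisfies x̄ = 1 - (n m/(n-1))(1/α̂ - 1). -/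
theorem stmt_16 (n : ℕ) (hn : 2 ≤ n) (m : ℝ) (hm : m ∈ Set.Ioo (0:ℝ) 1)
    (α : Fin n → ℝ) (hα : ∀ i, α i ∈ Set.Ioo (0:ℝ) 1)
    (hden : 1 - ∑ i, (1 - α i) / ((n : ℝ) - α i) ≠ 0) :
    (∑ i, (((n : ℝ) - 1) * α i - (1 - α i) * (n * m)) / ((n : ℝ) - α i)) /
        (1 - ∑ i, (1 - α i) / ((n : ℝ) - α i)) / n =
      1 - ((n : ℝ) * m / ((n : ℝ) - 1)) *
        (1 / ((n : ℝ) * (1 - (∑ i, (1 : ℝ) / ((n : ℝ) - α i))⁻¹)) - 1) := by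
  have hn2 : (2:ℝ) ≤ (n:ℝ) := by exact_mod_cast hn
  have hc : ∀ i, (0:ℝ) < (n:ℝ) - α i := fun i => by
    have := (hα i).2; linarith
  have hc' : ∀ i, (n:ℝ) - α i ≠ 0 := fun i => ne_of_gt (hc i)
  haveI : Nonempty (Fin n) := ⟨⟨0, by omega⟩⟩
  set S2 := ∑ i, (1:ℝ)/((n:ℝ) - α i) with hS2def
  have hS2pos : 0 < S2 := Finset.sum_pos (fun i _ => one_div_pos.mpr (hc i)) Finset.univ_nonempty
  have hden' : ∑ i, (1 - α i) / ((n : ℝ) - α i) = (n:ℝ) - ((n:ℝ)-1) * S2 := by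
    have h : ∀ i ∈ (Finset.univ : Finset (Fin n)),
        (1 - α i)/((n:ℝ)-α i) = 1 - ((n:ℝ)-1)*(1/((n:ℝ)-α i)) := by
      intro i _; field_simp [hc' i]; ring
    rw [Finset.sum_congr rfl h, Finset.sum_sub_distrib, ← Finset.mul_sum,
      Finset.sum_const, Finset.card_univ, Fintype.card_fin, nsmul_eq_mul, mul_one, hS2def]
  have hnum : ∑ i, (((n : ℝ) - 1) * α i - (1 - α i) * (n * m)) / ((n : ℝ) - α i)
      = (n:ℝ)*((n:ℝ)-1)*(1+m)*S2 - (n:ℝ)*(((n:ℝ)-1)+(n:ℝ)*m) := by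
    have h : ∀ i ∈ (Finset.univ : Finset (Fin n)),
        (((n : ℝ) - 1) * α i - (1 - α i) * (n * m)) / ((n : ℝ) - α i)
          = (n:ℝ)*((n:ℝ)-1)*(1+m)*(1/((n:ℝ)-α i)) - (((n:ℝ)-1)+(n:ℝ)*m) := by
      intro i _; field_simp [hc' i]; ring
    rw [Finset.sum_congr rfl h, Finset.sum_sub_distrib, ← Finset.mul_sum,
      Finset.sum_const, Finset.card_univ, Fintype.card_fin, nsmul_eq_mul, hS2def]
  rw [hden'] at hden
  rw [hnum, hden']
  have hn1 : (n:ℝ) - 1 ≠ 0 := by linarith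
  have hS21 : S2 - 1 ≠ 0 := by
    intro h
    apply hden
    have h1 : S2 = 1 := by linarith
    rw [h1]; ring
  have hnne : (n:ℝ) ≠ 0 := by linarith
  have hS2ne : S2 ≠ 0 := ne_of_gt hS2pos
  have h1S : 1 - S2⁻¹ ≠ 0 := by
    intro h
    apply hS21
    field_simp at h
    linarith
  field_simp
  ring
end
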